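/- arXiv:1202.1684 — 4 statements merged into one kernel-verified Lean document; each statement's English description precedes it below -/
import Mathlib

section
/- Let C1, C2 > 0 be constants, γ = 7/6, and suppose the real number a ≥ max(288^6, (8·max(C1,C2))^168). Suppose p, q ≥ 0 satisfy p ≤ a^((5/2)(1-γ)) and q ≤ a^((3/2)(1-γ)). Let b = a^γ, p' = C1·(a^(γ-1))^2·(p^2 + (a^(1-γ))^6 + (a^(1-γ))^2·q^2), and q' = C2·[(a^(γ-1))^2·(p^2 + (a^(1-γ))^6 + (a^(1-γ))^2·q^2) + a^(γ-1)·(p·q + (a^(1-γ))^2·q + (a^(1-γ))^6) + (q^2 + (a^(1-γ))^2)]. Then p' ≤ b^((5/2)(1-γ)) and q' ≤ b^((3/2)(1-γ)). -/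
set_option maxHeartbeats 1000000


theorem stmt_3 (C1 C2 : ℝ) (hC1 : 0 < C1) (hC2 : 0 < C2)
    (γ : ℝ) (hγ : γ = 7 / 6)
    (a : ℝ) (ha : a ≥ max (288 ^ 6) ((8 * max C1 C2) ^ 168))
    (p q : ℝ) (hp0 : 0 ≤ p) (hq0 : 0 ≤ q)
    (hp : p ≤ a ^ ((5 / 2) * (1 - γ))) (hq : q ≤ a ^ ((3 / 2) * (1 - γ)))
    (b : ℝ) (hb : b = a ^ γ)
    (p' : ℝ)
    (hp' : p' = C1 * (a ^ (γ - 1)) ^ 2 *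
      (p ^ 2 + (a ^ (1 - γ)) ^ 6 + (a ^ (1 - γ)) ^ 2 * q ^ 2))
    (q' : ℝ)
    (hq' : q' = C2 * ((a ^ (γ - 1)) ^ 2 *
        (p ^ 2 + (a ^ (1 - γ)) ^ 6 + (a ^ (1 - γ)) ^ 2 * q ^ 2) +
      a ^ (γ - 1) * (p * q + (a ^ (1 - γ)) ^ 2 * q + (a ^ (1 - γ)) ^ 6) +
      (q ^ 2 + (a ^ (1 - γ)) ^ 2))) :
    p' ≤ b ^ ((5 / 2) * (1 - γ)) ∧ q' ≤ b ^ ((3 / 2) * (1 - γ)) := by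
  have ha0 : (0:ℝ) < a :=
    lt_of_lt_of_le (by positivity) ((le_max_left _ _).trans ha)
  have ha1 : (1:ℝ) ≤ a := le_trans (by norm_num) ((le_max_left _ _).trans ha)
  have hpow : ∀ (x : ℝ) (n : ℕ), (a ^ x) ^ n = a ^ (x * n) := fun x n => by
    rw [← Real.rpow_natCast (a ^ x) n, ← Real.rpow_mul ha0.le]
  have hmul : ∀ x y : ℝ, a ^ x * a ^ y = a ^ (x + y) := fun x y =>
    (Real.rpow_add ha0 x y).symm
  have hle : ∀ x y : ℝ, x ≤ y → a ^ x ≤ a ^ y := fun x y h =>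
    Real.rpow_le_rpow_of_exponent_le ha1 h
  have hKey : 8 * max C1 C2 ≤ a ^ ((1:ℝ)/72) := by
    rcases le_or_gt (8 * max C1 C2) 1 with h | h
    · refine h.trans ?_
      have := hle 0 (1/72) (by norm_num)
      rwa [Real.rpow_zero] at this
    · have hM1 : (1:ℝ) ≤ 8 * max C1 C2 := h.le
      have h168 : (8 * max C1 C2) ^ (168:ℕ) ≤ a := (le_max_right _ _).trans ha
      calc 8 * max C1 C2 = (8 * max C1 C2) ^ ((1:ℝ)) := (Real.rpow_one _).symm
        _ ≤ (8 * max C1 C2) ^ ((168:ℝ) * (1/72)) :=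
            Real.rpow_le_rpow_of_exponent_le hM1 (by norm_num)
        _ = ((8 * max C1 C2) ^ (168:ℕ)) ^ ((1:ℝ)/72) := by
            rw [Real.rpow_mul (by positivity)]; norm_cast
        _ ≤ a ^ ((1:ℝ)/72) := Real.rpow_le_rpow (by positivity) h168 (by norm_num)
  subst hγ hb hp' hq'
  -- rewrite hypotheses with concrete exponents
  have hp5 : p ≤ a ^ (-(5/12) : ℝ) := by
    convert hp using 2; norm_num
  have hq4 : q ≤ a ^ (-(1/4) : ℝ) := by
    convert hq using 2; norm_num
  have hp2 : p ^ 2 ≤ a ^ (-(5/6) : ℝ) := by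
    calc p ^ 2 ≤ (a ^ (-(5/12) : ℝ)) ^ 2 := pow_le_pow_left₀ hp0 hp5 2
      _ = a ^ (-(5/6) : ℝ) := by rw [hpow]; norm_num
  have hq2 : q ^ 2 ≤ a ^ (-(1/2) : ℝ) := by
    calc q ^ 2 ≤ (a ^ (-(1/4) : ℝ)) ^ 2 := pow_le_pow_left₀ hq0 hq4 2
      _ = a ^ (-(1/2) : ℝ) := by rw [hpow]; norm_num
  have e6 : (a ^ (1 - 7/6 : ℝ)) ^ 6 = a ^ (-1 : ℝ) := by rw [hpow]; norm_num
  have e2 : (a ^ (1 - 7/6 : ℝ)) ^ 2 = a ^ (-(1/3) : ℝ) := by rw [hpow]; norm_num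
  have g2 : (a ^ (7/6 - 1 : ℝ)) ^ 2 = a ^ ((1/3) : ℝ) := by rw [hpow]; norm_num
  have hpos : ∀ x : ℝ, (0:ℝ) < a ^ x := fun x => Real.rpow_pos_of_pos ha0 x
  -- inner sum bound
  have hinner : p ^ 2 + (a ^ (1 - 7/6 : ℝ)) ^ 6 + (a ^ (1 - 7/6 : ℝ)) ^ 2 * q ^ 2
      ≤ 3 * a ^ (-(5/6) : ℝ) := by
    rw [e6, e2]
    have h1 : a ^ (-1 : ℝ) ≤ a ^ (-(5/6) : ℝ) := hle _ _ (by norm_num)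
    have h2 : a ^ (-(1/3) : ℝ) * q ^ 2 ≤ a ^ (-(5/6) : ℝ) := by
      calc a ^ (-(1/3) : ℝ) * q ^ 2 ≤ a ^ (-(1/3) : ℝ) * a ^ (-(1/2) : ℝ) :=
            mul_le_mul_of_nonneg_left hq2 (hpos _).le
        _ = a ^ (-(5/6) : ℝ) := by rw [hmul]; norm_num
    linarith
  have hinnerpos : 0 ≤ p ^ 2 + (a ^ (1 - 7/6 : ℝ)) ^ 6 + (a ^ (1 - 7/6 : ℝ)) ^ 2 * q ^ 2 := by
    positivity
  have hC1M : 3 * C1 ≤ a ^ ((1:ℝ)/72) := by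
    refine le_trans ?_ hKey
    have := le_max_left C1 C2; nlinarith
  have hC2M : 8 * C2 ≤ a ^ ((1:ℝ)/24) := by
    refine le_trans (le_trans ?_ hKey) (hle _ _ (by norm_num))
    have := le_max_right C1 C2; nlinarith
  constructor
  · -- p' bound
    have hbeq : (a ^ (7/6 : ℝ)) ^ ((5/2) * (1 - 7/6) : ℝ) = a ^ (-(35/72) : ℝ) := by
      rw [← Real.rpow_mul ha0.le]; norm_num
    rw [hbeq, g2]
    calc C1 * a ^ ((1/3) : ℝ) *
        (p ^ 2 + (a ^ (1 - 7/6 : ℝ)) ^ 6 + (a ^ (1 - 7/6 : ℝ)) ^ 2 * q ^ 2)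
        ≤ C1 * a ^ ((1/3) : ℝ) * (3 * a ^ (-(5/6) : ℝ)) := by
          exact mul_le_mul_of_nonneg_left hinner (by positivity)
      _ = 3 * C1 * (a ^ ((1/3) : ℝ) * a ^ (-(5/6) : ℝ)) := by ring
      _ = 3 * C1 * a ^ (-(1/2) : ℝ) := by rw [hmul]; norm_num
      _ ≤ a ^ ((1:ℝ)/72) * a ^ (-(1/2) : ℝ) :=
          mul_le_mul_of_nonneg_right hC1M (hpos _).le
      _ = a ^ (-(35/72) : ℝ) := by rw [hmul]; norm_num
  · -- q' bound
    have hbeq : (a ^ (7/6 : ℝ)) ^ ((3/2) * (1 - 7/6) : ℝ) = a ^ (-(7/24) : ℝ) := by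
      rw [← Real.rpow_mul ha0.le]; norm_num
    rw [hbeq, g2, e6, e2]
    have hT1 : a ^ ((1/3) : ℝ) *
        (p ^ 2 + a ^ (-1 : ℝ) + a ^ (-(1/3) : ℝ) * q ^ 2) ≤ 3 * a ^ (-(1/3) : ℝ) := by
      have h := hinner; rw [e6, e2] at h
      calc a ^ ((1/3) : ℝ) * (p ^ 2 + a ^ (-1 : ℝ) + a ^ (-(1/3) : ℝ) * q ^ 2)
          ≤ a ^ ((1/3) : ℝ) * (3 * a ^ (-(5/6) : ℝ)) :=
            mul_le_mul_of_nonneg_left h (hpos _).le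
        _ = 3 * (a ^ ((1/3) : ℝ) * a ^ (-(5/6) : ℝ)) := by ring
        _ = 3 * a ^ (-(1/2) : ℝ) := by rw [hmul]; norm_num
        _ ≤ 3 * a ^ (-(1/3) : ℝ) := by
            have := hle (-(1/2)) (-(1/3)) (by norm_num); linarith
    have hT2 : a ^ ((1/6) : ℝ) *
        (p * q + a ^ (-(1/3) : ℝ) * q + a ^ (-1 : ℝ)) ≤ 3 * a ^ (-(1/3) : ℝ) := by
      have h1 : p * q ≤ a ^ (-(2/3) : ℝ) := by
        calc p * q ≤ a ^ (-(5/12) : ℝ) * a ^ (-(1/4) : ℝ) :=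
              mul_le_mul hp5 hq4 hq0 (hpos _).le
          _ = a ^ (-(2/3) : ℝ) := by rw [hmul]; norm_num
      have h2 : a ^ (-(1/3) : ℝ) * q ≤ a ^ (-(7/12) : ℝ) := by
        calc a ^ (-(1/3) : ℝ) * q ≤ a ^ (-(1/3) : ℝ) * a ^ (-(1/4) : ℝ) :=
              mul_le_mul_of_nonneg_left hq4 (hpos _).le
          _ = a ^ (-(7/12) : ℝ) := by rw [hmul]; norm_num
      have h1' : a ^ (-(2/3) : ℝ) ≤ a ^ (-(7/12) : ℝ) := hle _ _ (by norm_num)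
      have h3 : a ^ (-1 : ℝ) ≤ a ^ (-(7/12) : ℝ) := hle _ _ (by norm_num)
      calc a ^ ((1/6) : ℝ) * (p * q + a ^ (-(1/3) : ℝ) * q + a ^ (-1 : ℝ))
          ≤ a ^ ((1/6) : ℝ) * (3 * a ^ (-(7/12) : ℝ)) := by
            refine mul_le_mul_of_nonneg_left ?_ (hpos _).le; linarith
        _ = 3 * (a ^ ((1/6) : ℝ) * a ^ (-(7/12) : ℝ)) := by ring
        _ = 3 * a ^ (-(5/12) : ℝ) := by rw [hmul]; norm_num
        _ ≤ 3 * a ^ (-(1/3) : ℝ) := by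
            have := hle (-(5/12)) (-(1/3)) (by norm_num); linarith
    have hT3 : q ^ 2 + a ^ (-(1/3) : ℝ) ≤ 2 * a ^ (-(1/3) : ℝ) := by
      have : a ^ (-(1/2) : ℝ) ≤ a ^ (-(1/3) : ℝ) := hle _ _ (by norm_num)
      linarith
    have he16 : a ^ (7/6 - 1 : ℝ) = a ^ ((1/6) : ℝ) := by norm_num
    rw [he16]
    calc C2 * (a ^ ((1/3) : ℝ) * (p ^ 2 + a ^ (-1 : ℝ) + a ^ (-(1/3) : ℝ) * q ^ 2) +
          a ^ ((1/6) : ℝ) * (p * q + a ^ (-(1/3) : ℝ) * q + a ^ (-1 : ℝ)) +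
          (q ^ 2 + a ^ (-(1/3) : ℝ)))
        ≤ C2 * (8 * a ^ (-(1/3) : ℝ)) := by
          refine mul_le_mul_of_nonneg_left ?_ hC2.le; linarith
      _ = 8 * C2 * a ^ (-(1/3) : ℝ) := by ring
      _ ≤ a ^ ((1:ℝ)/24) * a ^ (-(1/3) : ℝ) :=
          mul_le_mul_of_nonneg_right hC2M (hpos _).le
      _ = a ^ (-(7/24) : ℝ) := by rw [hmul]; norm_num
end

section
/- Let C1, C2 be two non-parallel intersecting solid cylinders of radius 1 in ℝ³ with axes l1, l2, and let [x_i, y_i] = φ_i(C1 ∩ C2) as above. If the Hausdorff distance between [x1,y1] and [x2,y2] is at most 2, then the Hausdorff distance between the endpoint sets {x1, y1} and {x2, y2} is at most 2√2. -/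
set_option maxHeartbeats 1000000

open Metric Real Set

private lemma seg_compact {E : Type*} [NormedAddCommGroup E] [NormedSpace ℝ E]
    (x y : E) : IsCompact (segment ℝ x y) := by
  rw [segment_eq_image']
  exact isCompact_Icc.image (by fun_prop)

private lemma pyth_aux {E : Type*} [NormedAddCommGroup E] [InnerProductSpace ℝ E]
    (x1 u : E) (hu : ‖u‖ = 1) (z : E) (t : ℝ) :
    dist z (x1 + t • u) ^ 2
      = dist z (x1 + (inner ℝ (z - x1) u : ℝ) • u) ^ 2 + ((inner ℝ (z - x1) u : ℝ) - t) ^ 2 := by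
  set g : ℝ := inner ℝ (z - x1) u with hg
  have huu : (inner ℝ u u : ℝ) = 1 := by
    rw [real_inner_self_eq_norm_sq, hu]; norm_num
  have hdec : z - (x1 + t • u) = (z - (x1 + g • u)) + (g - t) • u := by module
  have horth : (inner ℝ (z - (x1 + g • u)) ((g - t) • u) : ℝ) = 0 := by
    have h0 : (inner ℝ (z - (x1 + g • u)) u : ℝ) = 0 := by
      have h1 : z - (x1 + g • u) = (z - x1) - g • u := by module
      rw [h1, inner_sub_left, real_inner_smul_left, huu, mul_one, hg, sub_self]
    rw [real_inner_smul_right, h0, mul_zero]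
  have hexp := norm_add_sq_real (z - (x1 + g • u)) ((g - t) • u)
  rw [horth] at hexp
  have hnu : ‖(g - t) • u‖ = |g - t| := by
    rw [norm_smul, hu, mul_one, Real.norm_eq_abs]
  rw [dist_eq_norm, dist_eq_norm, hdec, hexp, hnu, sq_abs]
  ring

private lemma key {E : Type*} [NormedAddCommGroup E] [InnerProductSpace ℝ E]
    (x1 y1 u : E) (hu : ‖u‖ = 1) (c : ℝ) (hy : y1 = x1 + c • u) (x2 y2 : E)
    (h1 : infDist x2 (segment ℝ x1 y1) ≤ 2)
    (h2 : infDist x1 (segment ℝ x2 y2) ≤ 2)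
    (h3 : infDist y1 (segment ℝ x2 y2) ≤ 2) :
    infDist x2 ({x1, y1} : Set E) ≤ 2 * Real.sqrt 2 := by
  by_contra hcon
  push_neg at hcon
  have hx1m : x1 ∈ ({x1, y1} : Set E) := by simp
  have hy1m : y1 ∈ ({x1, y1} : Set E) := by simp
  have hdx : 2 * Real.sqrt 2 < dist x2 x1 :=
    lt_of_lt_of_le hcon (infDist_le_dist_of_mem hx1m)
  have hdy : 2 * Real.sqrt 2 < dist x2 y1 :=
    lt_of_lt_of_le hcon (infDist_le_dist_of_mem hy1m)
  have hsq2 : Real.sqrt 2 ^ 2 = 2 := Real.sq_sqrt (by norm_num)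
  have hsqnn : (0:ℝ) ≤ Real.sqrt 2 := Real.sqrt_nonneg 2
  -- coordinates
  set g : E → ℝ := fun z => inner ℝ (z - x1) u with hgdef
  have hgx1 : g x1 = 0 := by simp [hgdef]
  have hgy1 : g y1 = c := by
    have huu : (inner ℝ u u : ℝ) = 1 := by
      rw [real_inner_self_eq_norm_sq, hu]; norm_num
    simp [hgdef, hy, real_inner_smul_left, huu, hu]
  have hglip : ∀ z w : E, |g z - g w| ≤ dist z w := by
    intro z w
    have h1 : g z - g w = inner ℝ (z - w) u := by
      rw [hgdef]; simp only []
      rw [← inner_sub_left]; congr 1; module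
    rw [h1, dist_eq_norm]
    calc |(inner ℝ (z - w) u : ℝ)| ≤ ‖z - w‖ * ‖u‖ := abs_real_inner_le_norm _ _
      _ = ‖z - w‖ := by rw [hu, mul_one]
  -- nearest point q on segment x1 y1
  obtain ⟨q, hqmem, hqdist⟩ :=
    (seg_compact x1 y1).exists_infDist_eq_dist ⟨x1, left_mem_segment ℝ x1 y1⟩ x2
  have hq2 : dist x2 q ≤ 2 := by rw [← hqdist]; exact h1
  obtain ⟨α, β, hα, hβ, hαβ, hqeq⟩ := hqmem
  have hqform : q = x1 + (β * c) • u := by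
    rw [← hqeq, hy]
    have : α • x1 + β • (x1 + c • u) = (α + β) • x1 + (β * c) • u := by module
    rw [this, hαβ, one_smul]
  set γ : ℝ := g x2 with hγdef
  set P : ℝ := dist x2 (x1 + γ • u) ^ 2 with hPdef
  have hpyth : ∀ t : ℝ, dist x2 (x1 + t • u) ^ 2 = P + (γ - t) ^ 2 := fun t =>
    pyth_aux x1 u hu x2 t
  have hPx : dist x2 x1 ^ 2 = P + γ ^ 2 := by
    have := hpyth 0
    simpa using this
  have hPy : dist x2 y1 ^ 2 = P + (γ - c) ^ 2 := by rw [hy]; exact hpyth c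
  have hPq : dist x2 q ^ 2 = P + (γ - β * c) ^ 2 := by rw [hqform]; exact hpyth (β * c)
  have hq4 : P + (γ - β * c) ^ 2 ≤ 4 := by
    rw [← hPq]; nlinarith [dist_nonneg (x := x2) (y := q)]
  have hPnn : 0 ≤ P := sq_nonneg _
  have hγ2 : 4 < γ ^ 2 := by nlinarith [dist_nonneg (x := x2) (y := x1)]
  have hγc2 : 4 < (γ - c) ^ 2 := by nlinarith [dist_nonneg (x := x2) (y := y1)]
  have hγq : |γ - β * c| ≤ 2 := by
    have := sq_nonneg P
    rw [abs_le]; constructor <;> nlinarith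
  -- δ := g y2 ; g of points of segment x2 y2 lies between γ and δ
  set δ : ℝ := g y2 with hδdef
  have hgseg : ∀ z ∈ segment ℝ x2 y2, min γ δ ≤ g z ∧ g z ≤ max γ δ := by
    rintro z ⟨a, b, ha, hb, hab, rfl⟩
    have hgz : g (a • x2 + b • y2) = a * γ + b * δ := by
      have h1 : a • x2 + b • y2 - x1 = a • (x2 - x1) + b • (y2 - x1) := by
        have hb' : b = 1 - a := by linarith
        subst hb'; module
      rw [hgdef]; simp only []
      rw [h1, inner_add_left, real_inner_smul_left, real_inner_smul_left]
    rw [hgz]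
    constructor
    · calc min γ δ = a * min γ δ + b * min γ δ := by rw [← add_mul, hab, one_mul]
        _ ≤ a * γ + b * δ := by
            gcongr <;> [exact min_le_left _ _; exact min_le_right _ _]
    · calc a * γ + b * δ ≤ a * max γ δ + b * max γ δ := by
            gcongr <;> [exact le_max_left _ _; exact le_max_right _ _]
        _ = max γ δ := by rw [← add_mul, hab, one_mul]
  have hne2 : (segment ℝ x2 y2).Nonempty := ⟨x2, left_mem_segment ℝ x2 y2⟩
  -- lower bounds on dist from x1 / y1 to points of segment x2 y2
  have hlbx : ∀ z ∈ segment ℝ x2 y2, |g z| ≤ dist x1 z := by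
    intro z hz
    have := hglip z x1
    rw [hgx1, sub_zero, dist_comm] at this
    exact this
  have hlby : ∀ z ∈ segment ℝ x2 y2, |g z - c| ≤ dist y1 z := by
    intro z hz
    have := hglip z y1
    rw [hgy1, dist_comm] at this
    exact this
  -- real case analysis
  have hβ01 : 0 ≤ β ∧ β ≤ 1 := ⟨hβ, by linarith⟩
  rcases le_or_gt 0 c with hc | hc
  · -- c ≥ 0 : show 2 < γ and γ < c - 2
    have hβc : 0 ≤ β * c ∧ β * c ≤ c := by
      constructor
      · positivity
      · nlinarith
    have hγpos : 2 < γ := by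
      rcases lt_or_ge 2 γ with h | h
      · exact h
      · exfalso
        have hγneg : γ < -2 := by nlinarith [abs_nonneg (γ - β * c), sq_abs (γ - β*c)]
        have : γ - β * c < -2 := by linarith [hβc.1]
        have := abs_le.mp hγq
        linarith
    have hγlt : γ < c - 2 := by
      rcases lt_or_ge γ (c - 2) with h | h
      · exact h
      · exfalso
        have hgt : c + 2 < γ := by nlinarith
        have : 2 < γ - β * c := by linarith [hβc.2]
        have := abs_le.mp hγq
        linarith
    rcases le_or_gt γ δ with hδγ | hδγ
    · -- all g z ≥ γ > 2, contradict h2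
      obtain ⟨z0, hz0, hz0d⟩ := (seg_compact x2 y2).exists_infDist_eq_dist hne2 x1
      have h1 := (hgseg z0 hz0).1
      rw [min_eq_left hδγ] at h1
      have hb := hlbx z0 hz0
      have : γ ≤ |g z0| := le_trans h1 (le_abs_self _)
      rw [hz0d] at h2
      linarith
    · -- all g z ≤ γ < c - 2, contradict h3
      obtain ⟨z0, hz0, hz0d⟩ := (seg_compact x2 y2).exists_infDist_eq_dist hne2 y1
      have h1 := (hgseg z0 hz0).2
      rw [max_eq_left hδγ.le] at h1
      have hb := hlby z0 hz0
      have : c - γ ≤ |g z0 - c| := by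
        rw [abs_sub_comm]
        exact le_trans (by linarith) (le_abs_self _)
      rw [hz0d] at h3
      linarith
  · -- c < 0 : show γ < -2 and γ > c + 2
    have hβc : c ≤ β * c ∧ β * c ≤ 0 := by
      constructor
      · nlinarith
      · exact mul_nonpos_of_nonneg_of_nonpos hβ hc.le
    have hγneg : γ < -2 := by
      rcases lt_or_ge γ (-2) with h | h
      · exact h
      · exfalso
        have : 2 < γ := by nlinarith
        have : 2 < γ - β * c := by linarith [hβc.2]
        have := abs_le.mp hγq
        linarith
    have hγgt : c + 2 < γ := by
      rcases lt_or_ge (c + 2) γ with h | h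
      · exact h
      · exfalso
        have hlt : γ < c - 2 := by nlinarith
        have : γ - β * c < -2 := by linarith [hβc.1]
        have := abs_le.mp hγq
        linarith
    rcases le_or_gt γ δ with hδγ | hδγ
    · -- all g z ≥ γ > c + 2, contradict h3
      obtain ⟨z0, hz0, hz0d⟩ := (seg_compact x2 y2).exists_infDist_eq_dist hne2 y1
      have h1 := (hgseg z0 hz0).1
      rw [min_eq_left hδγ] at h1
      have hb := hlby z0 hz0
      have : γ - c ≤ |g z0 - c| := le_trans (by linarith) (le_abs_self _)
      rw [hz0d] at h3
      linarith
    · -- all g z ≤ γ < -2, contradict h2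
      obtain ⟨z0, hz0, hz0d⟩ := (seg_compact x2 y2).exists_infDist_eq_dist hne2 x1
      have h1 := (hgseg z0 hz0).2
      rw [max_eq_left hδγ.le] at h1
      have hb := hlbx z0 hz0
      have : -γ ≤ |g z0| := by
        have : -g z0 ≤ |g z0| := neg_le_abs _
        linarith
      rw [hz0d] at h2
      linarith

theorem stmt_8
    (p1 v1 p2 v2 : EuclideanSpace ℝ (Fin 3))
    (hv1 : v1 ≠ 0) (hv2 : v2 ≠ 0)
    (hnonpar : ∀ c : ℝ, v2 ≠ c • v1)
    (L1 L2 : Set (EuclideanSpace ℝ (Fin 3)))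
    (hL1 : L1 = Set.range fun t : ℝ => p1 + t • v1)
    (hL2 : L2 = Set.range fun t : ℝ => p2 + t • v2)
    (C1 C2 : Set (EuclideanSpace ℝ (Fin 3)))
    (hC1 : C1 = {z | Metric.infDist z L1 ≤ 1})
    (hC2 : C2 = {z | Metric.infDist z L2 ≤ 1})
    (hinter : (C1 ∩ C2).Nonempty)
    (φ1 φ2 : EuclideanSpace ℝ (Fin 3) → EuclideanSpace ℝ (Fin 3))
    (hφ1 : ∀ z, φ1 z ∈ L1 ∧ dist z (φ1 z) = Metric.infDist z L1)
    (hφ2 : ∀ z, φ2 z ∈ L2 ∧ dist z (φ2 z) = Metric.infDist z L2)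
    (x1 y1 x2 y2 : EuclideanSpace ℝ (Fin 3))
    (hseg1 : φ1 '' (C1 ∩ C2) = segment ℝ x1 y1)
    (hseg2 : φ2 '' (C1 ∩ C2) = segment ℝ x2 y2)
    (hHaus : Metric.hausdorffDist (segment ℝ x1 y1) (segment ℝ x2 y2) ≤ 2) :
    Metric.hausdorffDist ({x1, y1} : Set (EuclideanSpace ℝ (Fin 3)))
      ({x2, y2} : Set (EuclideanSpace ℝ (Fin 3))) ≤ 2 * Real.sqrt 2 := by
  classical
  -- endpoints lie on the lines
  have hsub1 : segment ℝ x1 y1 ⊆ L1 := by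
    rw [← hseg1]; rintro z ⟨w, -, rfl⟩; exact (hφ1 w).1
  have hsub2 : segment ℝ x2 y2 ⊆ L2 := by
    rw [← hseg2]; rintro z ⟨w, -, rfl⟩; exact (hφ2 w).1
  have hx1L : x1 ∈ L1 := hsub1 (left_mem_segment ℝ x1 y1)
  have hy1L : y1 ∈ L1 := hsub1 (right_mem_segment ℝ x1 y1)
  have hx2L : x2 ∈ L2 := hsub2 (left_mem_segment ℝ x2 y2)
  have hy2L : y2 ∈ L2 := hsub2 (right_mem_segment ℝ x2 y2)
  -- unit directions
  have hnv1 : ‖v1‖ ≠ 0 := norm_ne_zero_iff.mpr hv1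
  have hnv2 : ‖v2‖ ≠ 0 := norm_ne_zero_iff.mpr hv2
  set u1 := ‖v1‖⁻¹ • v1 with hu1def
  set u2 := ‖v2‖⁻¹ • v2 with hu2def
  have hu1 : ‖u1‖ = 1 := by
    rw [hu1def, norm_smul, norm_inv, norm_norm, inv_mul_cancel₀ hnv1]
  have hu2 : ‖u2‖ = 1 := by
    rw [hu2def, norm_smul, norm_inv, norm_norm, inv_mul_cancel₀ hnv2]
  -- y1 = x1 + c1 • u1
  obtain ⟨a1, ha1⟩ : ∃ t : ℝ, x1 = p1 + t • v1 := by
    rw [hL1] at hx1L; obtain ⟨t, ht⟩ := hx1L; exact ⟨t, ht.symm⟩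
  obtain ⟨b1, hb1⟩ : ∃ t : ℝ, y1 = p1 + t • v1 := by
    rw [hL1] at hy1L; obtain ⟨t, ht⟩ := hy1L; exact ⟨t, ht.symm⟩
  obtain ⟨a2, ha2⟩ : ∃ t : ℝ, x2 = p2 + t • v2 := by
    rw [hL2] at hx2L; obtain ⟨t, ht⟩ := hx2L; exact ⟨t, ht.symm⟩
  obtain ⟨b2, hb2⟩ : ∃ t : ℝ, y2 = p2 + t • v2 := by
    rw [hL2] at hy2L; obtain ⟨t, ht⟩ := hy2L; exact ⟨t, ht.symm⟩
  have hy1e : y1 = x1 + ((b1 - a1) * ‖v1‖) • u1 := by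
    rw [ha1, hb1, hu1def]
    rw [smul_smul]
    rw [mul_assoc, mul_inv_cancel₀ hnv1, mul_one]
    module
  have hy2e : y2 = x2 + ((b2 - a2) * ‖v2‖) • u2 := by
    rw [ha2, hb2, hu2def]
    rw [smul_smul]
    rw [mul_assoc, mul_inv_cancel₀ hnv2, mul_one]
    module
  -- infDist bounds from Hausdorff hypothesis
  have hne1 : (segment ℝ x1 y1).Nonempty := ⟨x1, left_mem_segment ℝ x1 y1⟩
  have hne2 : (segment ℝ x2 y2).Nonempty := ⟨x2, left_mem_segment ℝ x2 y2⟩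
  have hfin : EMetric.hausdorffEdist (segment ℝ x1 y1) (segment ℝ x2 y2) ≠ ⊤ :=
    Metric.hausdorffEdist_ne_top_of_nonempty_of_bounded hne1 hne2
      (seg_compact x1 y1).isBounded (seg_compact x2 y2).isBounded
  have hfin' : EMetric.hausdorffEdist (segment ℝ x2 y2) (segment ℝ x1 y1) ≠ ⊤ := by
    exact Metric.hausdorffEdist_ne_top_of_nonempty_of_bounded hne2 hne1
      (seg_compact x2 y2).isBounded (seg_compact x1 y1).isBounded
  have hd1 : ∀ z ∈ segment ℝ x1 y1, infDist z (segment ℝ x2 y2) ≤ 2 := fun z hz =>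
    le_trans (infDist_le_hausdorffDist_of_mem hz hfin) hHaus
  have hd2 : ∀ z ∈ segment ℝ x2 y2, infDist z (segment ℝ x1 y1) ≤ 2 := fun z hz =>
    le_trans (infDist_le_hausdorffDist_of_mem hz hfin') (by rwa [hausdorffDist_comm])
  -- apply the key lemma four times
  have k1 : infDist x2 ({x1, y1} : Set _) ≤ 2 * Real.sqrt 2 :=
    key x1 y1 u1 hu1 _ hy1e x2 y2
      (hd2 x2 (left_mem_segment ℝ x2 y2))
      (hd1 x1 (left_mem_segment ℝ x1 y1))
      (hd1 y1 (right_mem_segment ℝ x1 y1))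
  have k2 : infDist y2 ({x1, y1} : Set _) ≤ 2 * Real.sqrt 2 :=
    key x1 y1 u1 hu1 _ hy1e y2 x2
      (hd2 y2 (right_mem_segment ℝ x2 y2))
      (by rw [segment_symm]; exact hd1 x1 (left_mem_segment ℝ x1 y1))
      (by rw [segment_symm]; exact hd1 y1 (right_mem_segment ℝ x1 y1))
  have k3 : infDist x1 ({x2, y2} : Set _) ≤ 2 * Real.sqrt 2 :=
    key x2 y2 u2 hu2 _ hy2e x1 y1
      (hd1 x1 (left_mem_segment ℝ x1 y1))
      (hd2 x2 (left_mem_segment ℝ x2 y2))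
      (hd2 y2 (right_mem_segment ℝ x2 y2))
  have k4 : infDist y1 ({x2, y2} : Set _) ≤ 2 * Real.sqrt 2 :=
    key x2 y2 u2 hu2 _ hy2e y1 x1
      (hd1 y1 (right_mem_segment ℝ x1 y1))
      (by rw [segment_symm]; exact hd2 x2 (left_mem_segment ℝ x2 y2))
      (by rw [segment_symm]; exact hd2 y2 (right_mem_segment ℝ x2 y2))
  apply hausdorffDist_le_of_infDist (by positivity)
  · rintro z (rfl | rfl)
    · exact k3
    · exact k4
  · rintro z (rfl | rfl)
    · exact k1
    · exact k2
end

section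
/- Let C1, C2 ⊂ ℝ³ be two solid cylinders of radius 1, and let η : [0,1] → C1 ∪ C2 be a continuous curve with dist(η(0), η(1)) ≥ a/10 for some a ≥ 288^6. Then there exist a line l ⊂ ℝ³ and times t1 < t2 in [0,1] such that dist(η(t1), η(t2)) ≥ a/100 and η([t1, t2]) ⊆ B(l, 4), the closed 4-neighborhood of l. -/
set_option maxHeartbeats 1000000
open Metric Set RealInnerProductSpace

section helpers
variable {E : Type*} [NormedAddCommGroup E] [InnerProductSpace ℝ E]

noncomputable def perp (e w : E) : E := w - ⟪w, e⟫ • e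

lemma perp_add (e v w : E) : perp e (v + w) = perp e v + perp e w := by
  simp only [perp, inner_add_left, add_smul]; abel

lemma perp_smul (e : E) (c : ℝ) (w : E) : perp e (c • w) = c • perp e w := by
  simp only [perp, real_inner_smul_left, mul_smul, smul_sub]

lemma perp_sub (e v w : E) : perp e (v - w) = perp e v - perp e w := by
  simp only [perp, inner_sub_left, sub_smul]; abel

lemma norm_perp_sq {e : E} (he : ‖e‖ = 1) (w : E) :
    ‖perp e w‖^2 = ‖w‖^2 - ⟪w,e⟫^2 := by
  have := norm_sub_sq_real w (⟪w,e⟫ • e)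
  simp only [perp, real_inner_smul_right, norm_smul, Real.norm_eq_abs, he, mul_one] at this ⊢
  rw [this]; rw [real_inner_comm] at *
  ring_nf
  nlinarith [sq_abs (⟪e,w⟫)]

lemma norm_perp_le {e : E} (he : ‖e‖ = 1) (w : E) : ‖perp e w‖ ≤ ‖w‖ := by
  have h := norm_perp_sq he w
  nlinarith [norm_nonneg (perp e w), norm_nonneg w, sq_nonneg (⟪w,e⟫)]

lemma perp_self {e : E} (he : ‖e‖ = 1) : perp e e = 0 := by
  simp [perp, real_inner_self_eq_norm_sq, he]

lemma sin_symm {e1 e2 : E} (he1 : ‖e1‖ = 1) (he2 : ‖e2‖ = 1) :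
    ‖perp e1 e2‖ = ‖perp e2 e1‖ := by
  have h1 := norm_perp_sq he1 e2
  have h2 := norm_perp_sq he2 e1
  have h : ‖perp e1 e2‖^2 = ‖perp e2 e1‖^2 := by
    rw [h1, h2, he1, he2, real_inner_comm]
  have n1 := norm_nonneg (perp e1 e2)
  have n2 := norm_nonneg (perp e2 e1)
  nlinarith [sq_nonneg (‖perp e1 e2‖ - ‖perp e2 e1‖), sq_nonneg (‖perp e1 e2‖ + ‖perp e2 e1‖)]

lemma norm_perp_triangle {e : E} (he : ‖e‖ = 1) (v w : E) :
    ‖perp e v‖ ≤ ‖perp e w‖ + ‖v - w‖ := by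
  have h : perp e v = perp e w + perp e (v - w) := by
    rw [perp_sub]; abel
  calc ‖perp e v‖ = ‖perp e w + perp e (v-w)‖ := by rw [h]
    _ ≤ ‖perp e w‖ + ‖perp e (v-w)‖ := norm_add_le _ _
    _ ≤ ‖perp e w‖ + ‖v - w‖ := by linarith [norm_perp_le he (v-w)]

lemma perp_line_eval (e p2 e2 x : E) (c : ℝ) :
    perp e ((p2 + c • e2) - x) = perp e (p2 - x) + c • perp e e2 := by
  have h : (p2 + c • e2) - x = (p2 - x) + c • e2 := by abel
  rw [h, perp_add, perp_smul]

lemma perp_through {e : E} (he : ‖e‖ = 1) (b p2 e2 z : E) :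
    ‖perp e (z - b)‖ ≤ ‖perp e (p2 - b) + ⟪z - p2, e2⟫ • perp e e2‖ + ‖perp e2 (z - p2)‖ := by
  have htri := norm_perp_triangle he (z - b) ((p2 + ⟪z - p2, e2⟫ • e2) - b)
  have h1 : (z - b) - ((p2 + ⟪z - p2, e2⟫ • e2) - b) = perp e2 (z - p2) := by
    simp only [perp]; abel
  rw [h1, perp_line_eval] at htri
  exact htri

lemma sigma_lip {e2 : E} (he2 : ‖e2‖ = 1) (p2 z w : E) :
    |⟪z - p2, e2⟫ - ⟪w - p2, e2⟫| ≤ ‖z - w‖ := by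
  have h1 : ⟪z - p2, e2⟫ - ⟪w - p2, e2⟫ = ⟪z - w, e2⟫ := by
    rw [← inner_sub_left]; congr 1; abel
  rw [h1]
  refine (abs_real_inner_le_norm _ _).trans ?_
  rw [he2, mul_one]

lemma Gbound {e1 : E} (he1 : ‖e1‖ = 1) (p1 p2 e2 ζ : E)
    (h1 : ‖perp e1 (ζ - p1)‖ ≤ 1) (h2 : ‖perp e2 (ζ - p2)‖ ≤ 1) :
    ‖perp e1 (p2 - p1) + ⟪ζ - p2, e2⟫ • perp e1 e2‖ ≤ 2 := by
  rw [← perp_line_eval]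
  have htri := norm_perp_triangle he1 ((p2 + ⟪ζ - p2, e2⟫ • e2) - p1) (ζ - p1)
  have hdiff : ((p2 + ⟪ζ - p2, e2⟫ • e2) - p1) - (ζ - p1) = -(perp e2 (ζ - p2)) := by
    simp only [perp]; abel
  rw [hdiff, norm_neg] at htri
  linarith

lemma param_sep (u wv : E) (s s' c c' : ℝ) (hs : ‖wv + s • u‖ ≤ c) (hs' : ‖wv + s' • u‖ ≤ c') :
    |s - s'| * ‖u‖^2 ≤ (c + c') * ‖u‖ := by
  have h1 : ⟪wv + s • u, u⟫ - ⟪wv + s' • u, u⟫ = (s - s') * ‖u‖^2 := by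
    simp only [inner_add_left, real_inner_smul_left, real_inner_self_eq_norm_sq]; ring
  have h2 := abs_real_inner_le_norm (wv + s • u) u
  have h3 := abs_real_inner_le_norm (wv + s' • u) u
  have h4 : |(s - s') * ‖u‖^2| ≤ (c + c') * ‖u‖ := by
    rw [← h1]
    calc |⟪wv + s • u, u⟫ - ⟪wv + s' • u, u⟫| ≤ |⟪wv + s • u, u⟫| + |⟪wv + s' • u, u⟫| :=
          abs_sub _ _
      _ ≤ (c + c') * ‖u‖ := by nlinarith [norm_nonneg u]
  have h5 : |(s - s') * ‖u‖^2| = |s - s'| * ‖u‖^2 := by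
    rw [abs_mul, abs_of_nonneg (by positivity : (0:ℝ) ≤ ‖u‖^2)]
  linarith

lemma norm_affine_lip (u wv : E) (s s' : ℝ) :
    ‖wv + s • u‖ ≤ ‖wv + s' • u‖ + |s - s'| * ‖u‖ := by
  have h : wv + s • u = (wv + s' • u) + (s - s') • u := by rw [sub_smul]; abel
  rw [h]
  refine (norm_add_le _ _).trans ?_
  rw [norm_smul, Real.norm_eq_abs]

lemma infDist_le_perp (p e z : E) :
    Metric.infDist z (Set.range fun t : ℝ => p + t • e) ≤ ‖perp e (z - p)‖ := by
  have hm : p + ⟪z - p, e⟫ • e ∈ Set.range fun t : ℝ => p + t • e := ⟨_, rfl⟩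
  have h2 := Metric.infDist_le_dist_of_mem (x := z) hm
  rw [dist_eq_norm] at h2
  have h3 : z - (p + ⟪z - p, e⟫ • e) = perp e (z - p) := by simp [perp]; abel
  rwa [h3] at h2

lemma perp_le_infDist {e : E} (he : ‖e‖ = 1) (p z : E) :
    ‖perp e (z - p)‖ ≤ Metric.infDist z (Set.range fun t : ℝ => p + t • e) := by
  by_contra hlt
  push_neg at hlt
  have hne : (Set.range fun t : ℝ => p + t • e).Nonempty := ⟨p + (0:ℝ) • e, ⟨0, rfl⟩⟩
  obtain ⟨y, ⟨t, rfl⟩, hy⟩ := (Metric.infDist_lt_iff hne).mp hlt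
  have key : ‖perp e (z - p)‖ ≤ dist z (p + t • e) := by
    have h1 : perp e (z - (p + t • e)) = perp e (z - p) := by
      have h2 : z - (p + t • e) = (z - p) - t • e := by abel
      rw [h2, perp_sub, perp_smul, perp_self he, smul_zero, sub_zero]
    rw [← h1, dist_eq_norm]
    exact norm_perp_le he _
  linarith

lemma range_line_unit {v : E} (hv : v ≠ 0) (p : E) :
    (Set.range fun t : ℝ => p + t • v) = Set.range fun t : ℝ => p + t • (‖v‖⁻¹ • v) := by
  have hn : ‖v‖ ≠ 0 := norm_ne_zero_iff.mpr hv
  ext z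
  constructor
  · rintro ⟨t, rfl⟩
    exact ⟨t * ‖v‖, by
      show p + (t * ‖v‖) • (‖v‖⁻¹ • v) = p + t • v
      rw [smul_smul, mul_assoc, mul_inv_cancel₀ hn, mul_one]⟩
  · rintro ⟨t, rfl⟩
    exact ⟨t * ‖v‖⁻¹, by
      show p + (t * ‖v‖⁻¹) • v = p + t • (‖v‖⁻¹ • v)
      rw [smul_smul]⟩

lemma norm_unit {v : E} (hv : v ≠ 0) : ‖(‖v‖⁻¹ • v)‖ = 1 := by
  rw [norm_smul, Real.norm_eq_abs, abs_inv, abs_norm]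
  exact inv_mul_cancel₀ (norm_ne_zero_iff.mpr hv)

lemma geo2 (a : ℝ) (ha : a ≥ 650) (p1 e1 p2 e2 x y z w : E)
    (he1 : ‖e1‖ = 1) (he2 : ‖e2‖ = 1)
    (hx1 : ‖perp e1 (x - p1)‖ ≤ 1) (hx2 : ‖perp e2 (x - p2)‖ ≤ 1)
    (hy1 : ‖perp e1 (y - p1)‖ ≤ 1) (hy2 : ‖perp e2 (y - p2)‖ ≤ 1)
    (hD : ‖y - x‖ ≥ 2*a/25)
    (hm : ‖perp e1 e2‖ ≥ 100/a)
    (hz2 : ‖perp e2 (z - p2)‖ ≤ 1)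
    (hw1 : ‖perp e1 (w - p1)‖ ≤ 1) (hw2 : ‖perp e2 (w - p2)‖ ≤ 1)
    (hzw : ‖z - w‖ ≤ a/100) :
    ‖perp (‖y - x‖⁻¹ • (y - x)) (z - x)‖ ≤ 4 := by
  have ha0 : (0:ℝ) < a := by linarith
  have hD0 : (0:ℝ) < ‖y - x‖ := by linarith [hD, ha0]
  set e : E := ‖y - x‖⁻¹ • (y - x) with he_def
  have he : ‖e‖ = 1 := by
    rw [he_def, norm_smul, Real.norm_eq_abs, abs_inv, abs_norm]
    exact inv_mul_cancel₀ (ne_of_gt hD0)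
  have hyx : y - x = ‖y - x‖ • e := by
    rw [he_def, smul_smul, mul_inv_cancel₀ (ne_of_gt hD0), one_smul]
  have hperpe_yx : perp e (y - x) = 0 := by
    rw [hyx, perp_smul, perp_self he, smul_zero]
  have hm0 : (0:ℝ) < ‖perp e1 e2‖ := lt_of_lt_of_le (by positivity) hm
  have gx := Gbound he1 p1 p2 e2 x hx1 hx2
  have gw := Gbound he1 p1 p2 e2 w hw1 hw2
  have hsep := param_sep (perp e1 e2) (perp e1 (p2 - p1)) ⟪x - p2, e2⟫ ⟪w - p2, e2⟫ 2 2 gx gw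
  have hsxw : |⟪x - p2, e2⟫ - ⟪w - p2, e2⟫| ≤ a/25 := by
    have h1 : |⟪x - p2, e2⟫ - ⟪w - p2, e2⟫| * ‖perp e1 e2‖ ≤ 4 := by
      nlinarith [hm0, abs_nonneg (⟪x - p2, e2⟫ - ⟪w - p2, e2⟫)]
    have hma : 100 ≤ ‖perp e1 e2‖ * a := by
      rw [ge_iff_le, div_le_iff₀ ha0] at hm; linarith
    have h2 := mul_le_mul_of_nonneg_right h1 ha0.le
    have h3 := mul_le_mul_of_nonneg_left hma (abs_nonneg (⟪x - p2, e2⟫ - ⟪w - p2, e2⟫))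
    nlinarith [h2, h3]
  have hszw : |⟪z - p2, e2⟫ - ⟪w - p2, e2⟫| ≤ a/100 := (sigma_lip he2 p2 z w).trans hzw
  have hszx : |⟪z - p2, e2⟫ - ⟪x - p2, e2⟫| ≤ a/20 := by
    have h := abs_sub_le (⟪z - p2, e2⟫) (⟪w - p2, e2⟫) (⟪x - p2, e2⟫)
    rw [abs_sub_comm] at hsxw
    linarith
  have hHx : ‖perp e (p2 - x) + ⟪x - p2, e2⟫ • perp e e2‖ ≤ 1 := by
    rw [← perp_line_eval]
    refine (norm_perp_le he _).trans ?_
    have h1 : (p2 + ⟪x - p2, e2⟫ • e2) - x = -(perp e2 (x - p2)) := by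
      simp only [perp]; abel
    rw [h1, norm_neg]; exact hx2
  have hHy : ‖perp e (p2 - x) + ⟪y - p2, e2⟫ • perp e e2‖ ≤ 1 := by
    rw [← perp_line_eval]
    have htri := norm_perp_triangle he ((p2 + ⟪y - p2, e2⟫ • e2) - x) (y - x)
    have h1 : ((p2 + ⟪y - p2, e2⟫ • e2) - x) - (y - x) = -(perp e2 (y - p2)) := by
      simp only [perp]; abel
    rw [h1, norm_neg, hperpe_yx, norm_zero] at htri
    linarith
  have hsxy : ‖y - x‖ - 2 ≤ |⟪x - p2, e2⟫ - ⟪y - p2, e2⟫| := by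
    have hid : x - y = perp e2 (x - p2) - perp e2 (y - p2) + (⟪x - p2, e2⟫ - ⟪y - p2, e2⟫) • e2 := by
      simp only [perp, sub_smul]; abel
    have h2 : ‖x - y‖ ≤ 1 + 1 + |⟪x - p2, e2⟫ - ⟪y - p2, e2⟫| := by
      rw [hid]
      refine (norm_add_le _ _).trans ?_
      have h3 := norm_sub_le (perp e2 (x - p2)) (perp e2 (y - p2))
      rw [norm_smul, Real.norm_eq_abs, he2, mul_one]
      have h4 := abs_sub (⟪x - p2, e2⟫) (⟪y - p2, e2⟫)
      linarith [le_abs_self (⟪x - p2, e2⟫), le_abs_self (⟪y - p2, e2⟫)]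
    rw [norm_sub_rev] at h2
    linarith
  have hsep2 := param_sep (perp e e2) (perp e (p2 - x)) ⟪x - p2, e2⟫ ⟪y - p2, e2⟫ 1 1 hHx hHy
  have hfin1 := perp_through he x p2 e2 z
  have hlip := norm_affine_lip (perp e e2) (perp e (p2 - x)) ⟪z - p2, e2⟫ ⟪x - p2, e2⟫
  have hm2f : |⟪z - p2, e2⟫ - ⟪x - p2, e2⟫| * ‖perp e e2‖ ≤ 13/10 := by
    rcases eq_or_lt_of_le (norm_nonneg (perp e e2)) with h0 | hm2pos
    · rw [← h0, mul_zero]; norm_num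
    · have h1 : |⟪x - p2, e2⟫ - ⟪y - p2, e2⟫| * ‖perp e e2‖ ≤ 2 := by
        nlinarith [hm2pos, hsep2]
      have h2a := mul_le_mul_of_nonneg_right hsxy (norm_nonneg (perp e e2))
      have h2 : (‖y - x‖ - 2) * ‖perp e e2‖ ≤ 2 := le_trans h2a h1
      have h3 : a/13 ≤ ‖y - x‖ - 2 := by linarith
      have h4a := mul_le_mul_of_nonneg_right h3 (norm_nonneg (perp e e2))
      have h4 : a * ‖perp e e2‖ ≤ 26 := by nlinarith [h4a, h2]
      have h5 := mul_le_mul_of_nonneg_right hszx (norm_nonneg (perp e e2))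
      have h6 : a/20 * ‖perp e e2‖ = (a * ‖perp e e2‖)/20 := by ring
      rw [h6] at h5
      linarith
  calc ‖perp e (z - x)‖
      ≤ ‖perp e (p2 - x) + ⟪z - p2, e2⟫ • perp e e2‖ + ‖perp e2 (z - p2)‖ := hfin1
    _ ≤ (‖perp e (p2 - x) + ⟪x - p2, e2⟫ • perp e e2‖
          + |⟪z - p2, e2⟫ - ⟪x - p2, e2⟫| * ‖perp e e2‖) + 1 := by linarith [hlip]
    _ ≤ (1 + 13/10) + 1 := by linarith [hHx, hm2f]
    _ ≤ 4 := by norm_num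

lemma geo (a : ℝ) (ha : a ≥ 650) (p1 e1 p2 e2 x y : E)
    (he1 : ‖e1‖ = 1) (he2 : ‖e2‖ = 1)
    (hx1 : ‖perp e1 (x - p1)‖ ≤ 1) (hx2 : ‖perp e2 (x - p2)‖ ≤ 1)
    (hy1 : ‖perp e1 (y - p1)‖ ≤ 1) (hy2 : ‖perp e2 (y - p2)‖ ≤ 1)
    (hD : ‖y - x‖ ≥ 2*a/25) :
    ∃ p v : E, v ≠ 0 ∧ ∀ z w : E,
      (‖perp e1 (z - p1)‖ ≤ 1 ∨ ‖perp e2 (z - p2)‖ ≤ 1) →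
      ‖perp e1 (w - p1)‖ ≤ 1 → ‖perp e2 (w - p2)‖ ≤ 1 → ‖z - w‖ ≤ a/100 →
      Metric.infDist z (Set.range fun s : ℝ => p + s • v) ≤ 4 := by
  have ha0 : (0:ℝ) < a := by linarith
  by_cases hm : ‖perp e1 e2‖ ≥ 100/a
  · have hD0 : (0:ℝ) < ‖y - x‖ := by linarith
    have hyx0 : y - x ≠ 0 := by
      intro h0; rw [h0, norm_zero] at hD0; exact lt_irrefl 0 hD0
    have hunit : ‖(‖y - x‖⁻¹ • (y - x))‖ = 1 := norm_unit hyx0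
    refine ⟨x, ‖y - x‖⁻¹ • (y - x), ?_, ?_⟩
    · intro h0; rw [h0, norm_zero] at hunit; norm_num at hunit
    · intro z w hz hw1 hw2 hzw
      refine (infDist_le_perp x (‖y - x‖⁻¹ • (y - x)) z).trans ?_
      rcases hz with hz1 | hz2
      · have hm' : ‖perp e2 e1‖ ≥ 100/a := by rw [← sin_symm he1 he2]; exact hm
        exact geo2 a ha p2 e2 p1 e1 x y z w he2 he1 hx2 hx1 hy2 hy1 hD hm' hz1 hw2 hw1 hzw
      · exact geo2 a ha p1 e1 p2 e2 x y z w he1 he2 hx1 hx2 hy1 hy2 hD hm hz2 hw1 hw2 hzw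
  · push_neg at hm
    refine ⟨p1, e1, ?_, ?_⟩
    · intro h0; rw [h0, norm_zero] at he1; norm_num at he1
    · intro z w hz hw1 hw2 hzw
      refine (infDist_le_perp p1 e1 z).trans ?_
      rcases hz with hz1 | hz2
      · linarith
      · have gw := Gbound he1 p1 p2 e2 w hw1 hw2
        have hlip := norm_affine_lip (perp e1 e2) (perp e1 (p2 - p1)) ⟪z - p2, e2⟫ ⟪w - p2, e2⟫
        have hszw : |⟪z - p2, e2⟫ - ⟪w - p2, e2⟫| ≤ a/100 := (sigma_lip he2 p2 z w).trans hzw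
        have hprod : |⟪z - p2, e2⟫ - ⟪w - p2, e2⟫| * ‖perp e1 e2‖ ≤ 1 := by
          have h1 := mul_le_mul hszw hm.le (norm_nonneg _) (by positivity : (0:ℝ) ≤ a/100)
          have h2 : a/100 * (100/a) = 1 := by field_simp
          linarith
        have hfin1 := perp_through he1 p1 p2 e2 z
        linarith [hfin1, hlip, gw, hprod, hz2]
lemma conn_aux {s A B : Set ℝ} (hs : IsPreconnected s) (hA : IsClosed A) (hB : IsClosed B)
    (hcov : s ⊆ A ∪ B) (hdisj : ∀ x ∈ s, ¬(x ∈ A ∧ x ∈ B)) : s ⊆ A ∨ s ⊆ B := by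
  by_contra hcon
  push_neg at hcon
  obtain ⟨h1, h2⟩ := hcon
  rw [Set.not_subset] at h1 h2
  obtain ⟨x1, hx1s, hx1⟩ := h1
  obtain ⟨x2, hx2s, hx2⟩ := h2
  have hsub : s ⊆ Aᶜ ∪ Bᶜ := by
    intro x hx
    by_cases hxA : x ∈ A
    · exact Or.inr (fun hxB => hdisj x hx ⟨hxA, hxB⟩)
    · exact Or.inl hxA
  obtain ⟨x, hxs, hxA, hxB⟩ :=
    hs Aᶜ Bᶜ hA.isOpen_compl hB.isOpen_compl hsub ⟨x1, hx1s, hx1⟩ ⟨x2, hx2s, hx2⟩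
  rcases hcov hxs with h | h
  exacts [hxA h, hxB h]

end helpers

theorem stmt_9 (a : ℝ) (ha : a ≥ 288 ^ 6)
    (p1 v1 p2 v2 : EuclideanSpace ℝ (Fin 3))
    (hv1 : v1 ≠ 0) (hv2 : v2 ≠ 0)
    (C1 C2 : Set (EuclideanSpace ℝ (Fin 3)))
    (hC1 : C1 = {z | Metric.infDist z (Set.range fun t : ℝ => p1 + t • v1) ≤ 1})
    (hC2 : C2 = {z | Metric.infDist z (Set.range fun t : ℝ => p2 + t • v2) ≤ 1})
    (η : ℝ → EuclideanSpace ℝ (Fin 3))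
    (hcont : ContinuousOn η (Set.Icc 0 1))
    (hrange : ∀ t ∈ Set.Icc (0 : ℝ) 1, η t ∈ C1 ∪ C2)
    (hdist : dist (η 0) (η 1) ≥ a / 10) :
    ∃ (p v : EuclideanSpace ℝ (Fin 3)), v ≠ 0 ∧
      ∃ t1 t2 : ℝ, t1 ∈ Set.Icc (0 : ℝ) 1 ∧ t2 ∈ Set.Icc (0 : ℝ) 1 ∧ t1 < t2 ∧
        dist (η t1) (η t2) ≥ a / 100 ∧
        ∀ t ∈ Set.Icc t1 t2,
          Metric.infDist (η t) (Set.range fun s : ℝ => p + s • v) ≤ 4 := by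
  classical
  have ha0 : (0:ℝ) < a := lt_of_lt_of_le (by norm_num) ha
  have ha650 : a ≥ 650 := le_trans (by norm_num) ha
  set e1 : EuclideanSpace ℝ (Fin 3) := ‖v1‖⁻¹ • v1 with he1def
  set e2 : EuclideanSpace ℝ (Fin 3) := ‖v2‖⁻¹ • v2 with he2def
  have he1 : ‖e1‖ = 1 := norm_unit hv1
  have he2 : ‖e2‖ = 1 := norm_unit hv2
  have hr1 : (Set.range fun t : ℝ => p1 + t • v1) = Set.range fun t : ℝ => p1 + t • e1 :=
    range_line_unit hv1 p1
  have hr2 : (Set.range fun t : ℝ => p2 + t • v2) = Set.range fun t : ℝ => p2 + t • e2 :=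
    range_line_unit hv2 p2
  have memC1 : ∀ z, z ∈ C1 → ‖perp e1 (z - p1)‖ ≤ 1 := by
    intro z hz
    rw [hC1, Set.mem_setOf_eq, hr1] at hz
    exact (perp_le_infDist he1 p1 z).trans hz
  have memC2 : ∀ z, z ∈ C2 → ‖perp e2 (z - p2)‖ ≤ 1 := by
    intro z hz
    rw [hC2, Set.mem_setOf_eq, hr2] at hz
    exact (perp_le_infDist he2 p2 z).trans hz
  have hC1c : IsClosed C1 := by
    rw [hC1]; exact isClosed_le (Metric.continuous_infDist_pt _) continuous_const
  have hC2c : IsClosed C2 := by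
    rw [hC2]; exact isClosed_le (Metric.continuous_infDist_pt _) continuous_const
  set A := Icc (0:ℝ) 1 ∩ η ⁻¹' C1 with hAdef
  set B := Icc (0:ℝ) 1 ∩ η ⁻¹' C2 with hBdef
  have hAc : IsClosed A := hcont.preimage_isClosed_of_isClosed isClosed_Icc hC1c
  have hBc : IsClosed B := hcont.preimage_isClosed_of_isClosed isClosed_Icc hC2c
  have hAB : Icc (0:ℝ) 1 ⊆ A ∪ B := by
    intro t ht
    rcases hrange t ht with h | h
    · exact Or.inl ⟨ht, h⟩
    · exact Or.inr ⟨ht, h⟩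
  by_cases hi : ∃ t1 t2 : ℝ, (t1 ∈ Icc (0:ℝ) 1 ∧ t2 ∈ Icc (0:ℝ) 1 ∧ t1 < t2 ∧
      ((∀ s ∈ Icc t1 t2, η s ∈ C1) ∨ (∀ s ∈ Icc t1 t2, η s ∈ C2))) ∧
      a/100 ≤ dist (η t1) (η t2)
  · obtain ⟨t1, t2, ⟨h1, h2, hlt, hcyl⟩, hd⟩ := hi
    rcases hcyl with h | h
    · refine ⟨p1, v1, hv1, t1, t2, h1, h2, hlt, hd, fun t ht => ?_⟩
      have hm := h t ht
      rw [hC1, Set.mem_setOf_eq] at hm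
      linarith
    · refine ⟨p2, v2, hv2, t1, t2, h1, h2, hlt, hd, fun t ht => ?_⟩
      have hm := h t ht
      rw [hC2, Set.mem_setOf_eq] at hm
      linarith
  · push_neg at hi
    have key : ∀ u t : ℝ, u ∈ Icc (0:ℝ) 1 → t ∈ Icc (0:ℝ) 1 → u < t →
        ((∀ s ∈ Icc u t, η s ∈ C1) ∨ (∀ s ∈ Icc u t, η s ∈ C2)) →
        dist (η u) (η t) < a/100 := by
      intro u t hu ht hut hcyl
      exact hi u t ⟨hu, ht, hut, hcyl⟩
    have onecyl : ∀ u t : ℝ, u ∈ Icc (0:ℝ) 1 → t ∈ Icc (0:ℝ) 1 → u < t →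
        η u ∈ C1 → η u ∈ C2 → (∀ s, s ∈ Ioc u t → ¬(η s ∈ C1 ∧ η s ∈ C2)) →
        ((∀ s ∈ Icc u t, η s ∈ C1) ∨ (∀ s ∈ Icc u t, η s ∈ C2)) := by
      intro u t hu ht hut hu1 hu2 hK
      have hsub : Ioc u t ⊆ A ∪ B := fun s hs =>
        hAB ⟨le_trans hu.1 hs.1.le, le_trans hs.2 ht.2⟩
      have hdisj : ∀ s ∈ Ioc u t, ¬(s ∈ A ∧ s ∈ B) := by
        intro s hs hc
        exact hK s hs ⟨hc.1.2, hc.2.2⟩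
      rcases conn_aux isPreconnected_Ioc hAc hBc hsub hdisj with h | h
      · left; intro s hs
        rcases eq_or_lt_of_le hs.1 with heq | h'
        · rw [← heq]; exact hu1
        · exact (h ⟨h', hs.2⟩).2
      · right; intro s hs
        rcases eq_or_lt_of_le hs.1 with heq | h'
        · rw [← heq]; exact hu2
        · exact (h ⟨h', hs.2⟩).2
    have onecyl' : ∀ u t : ℝ, u ∈ Icc (0:ℝ) 1 → t ∈ Icc (0:ℝ) 1 → u < t →
        η t ∈ C1 → η t ∈ C2 → (∀ s, s ∈ Ico u t → ¬(η s ∈ C1 ∧ η s ∈ C2)) →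
        ((∀ s ∈ Icc u t, η s ∈ C1) ∨ (∀ s ∈ Icc u t, η s ∈ C2)) := by
      intro u t hu ht hut ht1 ht2 hK
      have hsub : Ico u t ⊆ A ∪ B := fun s hs =>
        hAB ⟨le_trans hu.1 hs.1, le_trans hs.2.le ht.2⟩
      have hdisj : ∀ s ∈ Ico u t, ¬(s ∈ A ∧ s ∈ B) := by
        intro s hs hc
        exact hK s hs ⟨hc.1.2, hc.2.2⟩
      rcases conn_aux isPreconnected_Ico hAc hBc hsub hdisj with h | h
      · left; intro s hs
        rcases lt_or_eq_of_le hs.2 with h' | heq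
        · exact (h ⟨hs.1, h'⟩).2
        · rw [heq]; exact ht1
      · right; intro s hs
        rcases lt_or_eq_of_le hs.2 with h' | heq
        · exact (h ⟨hs.1, h'⟩).2
        · rw [heq]; exact ht2
    set K := A ∩ B with hKdef
    have hKc : IsClosed K := hAc.inter hBc
    have hKsub : K ⊆ Icc (0:ℝ) 1 := fun x hx => hx.1.1
    have hKbb : BddBelow K := BddBelow.mono hKsub bddBelow_Icc
    have hKba : BddAbove K := BddAbove.mono hKsub bddAbove_Icc
    have hKne : K.Nonempty := by
      by_contra hne
      rw [Set.not_nonempty_iff_eq_empty] at hne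
      have hdisj : ∀ x ∈ Icc (0:ℝ) 1, ¬(x ∈ A ∧ x ∈ B) := by
        intro x _ hc
        have hx : x ∈ K := ⟨hc.1, hc.2⟩
        rw [hne] at hx
        exact hx
      have h01 : (0:ℝ) ∈ Icc (0:ℝ) 1 := left_mem_Icc.mpr zero_le_one
      have h11 : (1:ℝ) ∈ Icc (0:ℝ) 1 := right_mem_Icc.mpr zero_le_one
      rcases conn_aux isPreconnected_Icc hAc hBc hAB hdisj with h | h
      · have := key 0 1 h01 h11 zero_lt_one (Or.inl fun s hs => (h hs).2)
        linarith
      · have := key 0 1 h01 h11 zero_lt_one (Or.inr fun s hs => (h hs).2)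
        linarith
    set α := sInf K with hαdef
    set β := sSup K with hβdef
    have hαK : α ∈ K := hKc.csInf_mem hKne hKbb
    have hβK : β ∈ K := hKc.csSup_mem hKne hKba
    have hα01 : α ∈ Icc (0:ℝ) 1 := hKsub hαK
    have hβ01 : β ∈ Icc (0:ℝ) 1 := hKsub hβK
    have d0α : dist (η 0) (η α) ≤ a/100 := by
      rcases eq_or_lt_of_le hα01.1 with h0 | h0
      · rw [← h0, dist_self]; positivity
      · have hno : ∀ s, s ∈ Ico (0:ℝ) α → ¬(η s ∈ C1 ∧ η s ∈ C2) := by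
          intro s hs hc
          have hs01 : s ∈ Icc (0:ℝ) 1 := ⟨hs.1, le_trans hs.2.le hα01.2⟩
          have hsK : s ∈ K := ⟨⟨hs01, hc.1⟩, ⟨hs01, hc.2⟩⟩
          exact notMem_of_lt_csInf hs.2 hKbb hsK
        have h01 : (0:ℝ) ∈ Icc (0:ℝ) 1 := left_mem_Icc.mpr zero_le_one
        have hor := onecyl' 0 α h01 hα01 h0 hαK.1.2 hαK.2.2 hno
        exact (key 0 α h01 hα01 h0 hor).le
    have dβ1 : dist (η β) (η 1) ≤ a/100 := by
      rcases eq_or_lt_of_le hβ01.2 with h0 | h0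
      · rw [h0, dist_self]; positivity
      · have hno : ∀ s, s ∈ Ioc β 1 → ¬(η s ∈ C1 ∧ η s ∈ C2) := by
          intro s hs hc
          have hs01 : s ∈ Icc (0:ℝ) 1 := ⟨le_trans hβ01.1 hs.1.le, hs.2⟩
          have hsK : s ∈ K := ⟨⟨hs01, hc.1⟩, ⟨hs01, hc.2⟩⟩
          have := le_csSup hKba hsK
          linarith [hs.1]
        have h11 : (1:ℝ) ∈ Icc (0:ℝ) 1 := right_mem_Icc.mpr zero_le_one
        have hor := onecyl β 1 hβ01 h11 h0 hβK.1.2 hβK.2.2 hno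
        exact (key β 1 hβ01 h11 h0 hor).le
    have hDd : dist (η α) (η β) ≥ 2*a/25 := by
      have h4 := dist_triangle4 (η 0) (η α) (η β) (η 1)
      have h5 := dist_comm (η 0) (η α)
      linarith [hdist]
    have hαβ : α < β := by
      have hle : α ≤ β := csInf_le_csSup hKne hKbb hKba
      rcases eq_or_lt_of_le hle with h | h
      · exfalso
        rw [h, dist_self] at hDd
        linarith
      · exact h
    have hnear : ∀ t ∈ Icc α β, ∃ u, u ∈ K ∧ dist (η t) (η u) ≤ a/100 := by
      intro t ht
      have ht01 : t ∈ Icc (0:ℝ) 1 := ⟨le_trans hα01.1 ht.1, le_trans ht.2 hβ01.2⟩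
      have hK'ne : (K ∩ Icc α t).Nonempty := ⟨α, hαK, le_refl α, ht.1⟩
      have hK'c : IsClosed (K ∩ Icc α t) := hKc.inter isClosed_Icc
      have hK'ba : BddAbove (K ∩ Icc α t) := BddAbove.mono inter_subset_right bddAbove_Icc
      set u := sSup (K ∩ Icc α t) with hudef
      have huK' : u ∈ K ∩ Icc α t := hK'c.csSup_mem hK'ne hK'ba
      have hut : u ≤ t := huK'.2.2
      have huα : α ≤ u := huK'.2.1
      have hu01 : u ∈ Icc (0:ℝ) 1 := hKsub huK'.1
      rcases eq_or_lt_of_le hut with h | h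
      · exact ⟨u, huK'.1, by rw [h, dist_self]; positivity⟩
      · have hno : ∀ s, s ∈ Ioc u t → ¬(η s ∈ C1 ∧ η s ∈ C2) := by
          intro s hs hc
          have hs01 : s ∈ Icc (0:ℝ) 1 := ⟨le_trans hu01.1 hs.1.le, le_trans hs.2 ht01.2⟩
          have hsK' : s ∈ K ∩ Icc α t :=
            ⟨⟨⟨hs01, hc.1⟩, ⟨hs01, hc.2⟩⟩, ⟨le_trans huα hs.1.le, hs.2⟩⟩
          have := le_csSup hK'ba hsK'
          linarith [hs.1]
        have hor := onecyl u t hu01 ht01 h huK'.1.1.2 huK'.1.2.2 hno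
        have := key u t hu01 ht01 h hor
        exact ⟨u, huK'.1, by rw [dist_comm]; linarith⟩
    have hx1 : ‖perp e1 (η α - p1)‖ ≤ 1 := memC1 _ hαK.1.2
    have hx2 : ‖perp e2 (η α - p2)‖ ≤ 1 := memC2 _ hαK.2.2
    have hy1 : ‖perp e1 (η β - p1)‖ ≤ 1 := memC1 _ hβK.1.2
    have hy2 : ‖perp e2 (η β - p2)‖ ≤ 1 := memC2 _ hβK.2.2
    have hDn : ‖η β - η α‖ ≥ 2*a/25 := by
      rw [← dist_eq_norm, dist_comm]
      exact hDd
    obtain ⟨p, v, hv, hgeo⟩ := geo a ha650 p1 e1 p2 e2 (η α) (η β)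
      he1 he2 hx1 hx2 hy1 hy2 hDn
    refine ⟨p, v, hv, α, β, hα01, hβ01, hαβ, by linarith [hDd], ?_⟩
    intro t ht
    obtain ⟨u, huK, hdu⟩ := hnear t ht
    have ht01 : t ∈ Icc (0:ℝ) 1 := ⟨le_trans hα01.1 ht.1, le_trans ht.2 hβ01.2⟩
    have hzor : ‖perp e1 (η t - p1)‖ ≤ 1 ∨ ‖perp e2 (η t - p2)‖ ≤ 1 := by
      rcases hrange t ht01 with h | h
      · exact Or.inl (memC1 _ h)
      · exact Or.inr (memC2 _ h)
    exact hgeo (η t) (η u) hzor (memC1 _ huK.1.2) (memC2 _ huK.2.2)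
      (by rw [← dist_eq_norm]; exact hdu)
end

section
/- Let (p_n)_{n≥0} and (q_n)_{n≥0} be sequences of nonnegative reals, let a_0 ≥ 288^6 ∨ (8·max(C1,C2))^168 with constants C1, C2 > 0, γ = 7/6, a_n = a_0^(γ^n), and suppose for all n ≥ 1: p_n ≤ C1·(a_{n-1}^(γ-1))²·[p_{n-1}² + (a_{n-1}^(1-γ))⁶ + (a_{n-1}^(1-γ))²·q_{n-1}²] and q_n ≤ C2·{(a_{n-1}^(γ-1))²·[p_{n-1}² + (a_{n-1}^(1-γ))⁶ + (a_{n-1}^(1-γ))²·q_{n-1}²] + a_{n-1}^(γ-1)·[p_{n-1}·q_{n-1} + (a_{n-1}^(1-γ))²·q_{n-1} + (a_{n-1}^(1-γ))⁶] + [q_{n-1}² + (a_{n-1}^(1-γ))²]}. If p_0 ≤ a_0^((5/2)(1-γ)) and q_0 ≤ a_0^((3/2)(1-γ)), then for all n ≥ 0: p_n ≤ a_n^((5/2)(1-γ)) and q_n ≤ a_n^((3/2)(1-γ)); in particular p_n → 0 as n → ∞. -/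
private lemma auxp (C1 c p q : ℝ) (hc : 0 < c) (hc1 : c ≤ 1) (hC1 : 0 ≤ C1)
    (hcond : 3 * C1 * c ≤ 1) (hp : 0 ≤ p) (hq : 0 ≤ q)
    (hpb : p ≤ c ^ 30) (hqb : q ≤ c ^ 18) :
    C1 * ((c ^ 12)⁻¹) ^ 2 * (p ^ 2 + (c ^ 12) ^ 6 + (c ^ 12) ^ 2 * q ^ 2) ≤ c ^ 35 := by
  have hc24 : (0:ℝ) < c ^ 24 := pow_pos hc 24
  have h1 : p ^ 2 ≤ c ^ 60 := by
    calc p ^ 2 ≤ (c ^ 30) ^ 2 := pow_le_pow_left₀ hp hpb 2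
    _ = c ^ 60 := by ring
  have h2 : q ^ 2 ≤ c ^ 36 := by
    calc q ^ 2 ≤ (c ^ 18) ^ 2 := pow_le_pow_left₀ hq hqb 2
    _ = c ^ 36 := by ring
  have h3 : c ^ 72 ≤ c ^ 60 := pow_le_pow_of_le_one hc.le hc1 (by norm_num)
  have heq : C1 * ((c ^ 12)⁻¹) ^ 2 * (p ^ 2 + (c ^ 12) ^ 6 + (c ^ 12) ^ 2 * q ^ 2)
      = C1 * (p ^ 2 + c ^ 72 + c ^ 24 * q ^ 2) / c ^ 24 := by
    field_simp
  rw [heq, div_le_iff₀ hc24]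
  have hX : p ^ 2 + c ^ 72 + c ^ 24 * q ^ 2 ≤ 3 * c ^ 60 := by
    nlinarith [mul_le_mul_of_nonneg_left h2 hc24.le]
  nlinarith [mul_le_mul_of_nonneg_left hX hC1,
    mul_le_mul_of_nonneg_right hcond (pow_nonneg hc.le 59)]

private lemma auxq (C2 c p q : ℝ) (hc : 0 < c) (hc1 : c ≤ 1) (hC2 : 0 ≤ C2)
    (hcond : 8 * C2 * c ^ 3 ≤ 1) (hp : 0 ≤ p) (hq : 0 ≤ q)
    (hpb : p ≤ c ^ 30) (hqb : q ≤ c ^ 18) :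
    C2 * (((c ^ 12)⁻¹) ^ 2 * (p ^ 2 + (c ^ 12) ^ 6 + (c ^ 12) ^ 2 * q ^ 2)
      + (c ^ 12)⁻¹ * (p * q + (c ^ 12) ^ 2 * q + (c ^ 12) ^ 6)
      + (q ^ 2 + (c ^ 12) ^ 2)) ≤ c ^ 21 := by
  have hc24 : (0:ℝ) < c ^ 24 := pow_pos hc 24
  have hmono : ∀ k l : ℕ, k ≤ l → c ^ l ≤ c ^ k := fun k l h =>
    pow_le_pow_of_le_one hc.le hc1 h
  have h1 : p ^ 2 ≤ c ^ 60 := by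
    calc p ^ 2 ≤ (c ^ 30) ^ 2 := pow_le_pow_left₀ hp hpb 2
    _ = c ^ 60 := by ring
  have h2 : q ^ 2 ≤ c ^ 36 := by
    calc q ^ 2 ≤ (c ^ 18) ^ 2 := pow_le_pow_left₀ hq hqb 2
    _ = c ^ 36 := by ring
  have hpq : p * q ≤ c ^ 48 := by
    calc p * q ≤ c ^ 30 * c ^ 18 := mul_le_mul hpb hqb hq (pow_nonneg hc.le 30)
    _ = c ^ 48 := by ring
  have m1 : p ^ 2 ≤ c ^ 48 := h1.trans (hmono 48 60 (by norm_num))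
  have m2 : c ^ 24 * q ^ 2 ≤ c ^ 48 := by
    nlinarith [mul_le_mul_of_nonneg_left h2 hc24.le, hmono 48 60 (by norm_num : 48 ≤ 60)]
  have m3 : c ^ 72 ≤ c ^ 48 := hmono 48 72 (by norm_num)
  have m3' : c ^ 84 ≤ c ^ 48 := hmono 48 84 (by norm_num)
  have m4 : c ^ 12 * (p * q) ≤ c ^ 48 := by
    nlinarith [mul_le_mul_of_nonneg_left hpq (pow_nonneg hc.le 12),
      hmono 48 60 (by norm_num : 48 ≤ 60)]
  have m5 : c ^ 36 * q ≤ c ^ 48 := by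
    nlinarith [mul_le_mul_of_nonneg_left hqb (pow_nonneg hc.le 36),
      hmono 48 54 (by norm_num : 48 ≤ 54)]
  have heq : C2 * (((c ^ 12)⁻¹) ^ 2 * (p ^ 2 + (c ^ 12) ^ 6 + (c ^ 12) ^ 2 * q ^ 2)
      + (c ^ 12)⁻¹ * (p * q + (c ^ 12) ^ 2 * q + (c ^ 12) ^ 6)
      + (q ^ 2 + (c ^ 12) ^ 2))
      = C2 * ((p ^ 2 + c ^ 72 + c ^ 24 * q ^ 2)
        + (c ^ 12 * (p * q) + c ^ 36 * q + c ^ 84)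
        + (c ^ 24 * q ^ 2 + c ^ 48)) / c ^ 24 := by
    field_simp
  rw [heq, div_le_iff₀ hc24]
  have hS : (p ^ 2 + c ^ 72 + c ^ 24 * q ^ 2)
      + (c ^ 12 * (p * q) + c ^ 36 * q + c ^ 84)
      + (c ^ 24 * q ^ 2 + c ^ 48) ≤ 8 * c ^ 48 := by
    linarith
  nlinarith [mul_le_mul_of_nonneg_left hS hC2,
    mul_le_mul_of_nonneg_right hcond (pow_nonneg hc.le 45)]

theorem stmt_19 (C1 C2 : ℝ) (hC1 : 0 < C1) (hC2 : 0 < C2)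
    (γ : ℝ) (hγ : γ = 7 / 6)
    (a : ℝ) (ha : a ≥ max (288 ^ 6) ((8 * max C1 C2) ^ 168))
    (aseq : ℕ → ℝ) (haseq : ∀ n, aseq n = a ^ (γ ^ n))
    (p q : ℕ → ℝ) (hp0 : ∀ n, 0 ≤ p n) (hq0 : ∀ n, 0 ≤ q n)
    (hprec : ∀ n : ℕ, 1 ≤ n →
      p n ≤ C1 * (aseq (n - 1) ^ (γ - 1)) ^ 2 *
        (p (n - 1) ^ 2 + (aseq (n - 1) ^ (1 - γ)) ^ 6 +
          (aseq (n - 1) ^ (1 - γ)) ^ 2 * q (n - 1) ^ 2))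
    (hqrec : ∀ n : ℕ, 1 ≤ n →
      q n ≤ C2 * ((aseq (n - 1) ^ (γ - 1)) ^ 2 *
          (p (n - 1) ^ 2 + (aseq (n - 1) ^ (1 - γ)) ^ 6 +
            (aseq (n - 1) ^ (1 - γ)) ^ 2 * q (n - 1) ^ 2) +
        aseq (n - 1) ^ (γ - 1) *
          (p (n - 1) * q (n - 1) + (aseq (n - 1) ^ (1 - γ)) ^ 2 * q (n - 1) +
            (aseq (n - 1) ^ (1 - γ)) ^ 6) +
        (q (n - 1) ^ 2 + (aseq (n - 1) ^ (1 - γ)) ^ 2)))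
    (hp0' : p 0 ≤ aseq 0 ^ ((5 / 2) * (1 - γ)))
    (hq0' : q 0 ≤ aseq 0 ^ ((3 / 2) * (1 - γ))) :
    (∀ n : ℕ, p n ≤ aseq n ^ ((5 / 2) * (1 - γ)) ∧
        q n ≤ aseq n ^ ((3 / 2) * (1 - γ))) ∧
      Filter.Tendsto p Filter.atTop (nhds 0) := by
  subst hγ
  have ha288 : (288:ℝ) ^ 6 ≤ a := le_trans (le_max_left _ _) ha
  have ha1 : (1:ℝ) < a := lt_of_lt_of_le (by norm_num) ha288
  have ha0 : (0:ℝ) < a := by linarith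
  have haK : (8 * max C1 C2) ^ 168 ≤ a := le_trans (le_max_right _ _) ha
  have hM : 0 < max C1 C2 := lt_of_lt_of_le hC1 (le_max_left _ _)
  have hKpos : 0 < 8 * max C1 C2 := by linarith
  -- the basic rescaled quantity
  set c : ℕ → ℝ := fun n => a ^ (-(1 / 72) * (7 / 6 : ℝ) ^ n) with hc_def
  have hcpow : ∀ n k : ℕ, c n ^ k = a ^ (-(1 / 72) * (7 / 6 : ℝ) ^ n * k) := by
    intro n k
    rw [hc_def]
    rw [← Real.rpow_natCast (a ^ (-(1 / 72) * (7 / 6 : ℝ) ^ n)) k,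
      ← Real.rpow_mul ha0.le]
  have hA : ∀ (n : ℕ) (x : ℝ), aseq n ^ x = a ^ ((7 / 6 : ℝ) ^ n * x) := by
    intro n x
    rw [haseq n, ← Real.rpow_mul ha0.le]
  have e30 : ∀ n, aseq n ^ ((5 / 2 : ℝ) * (1 - 7 / 6)) = c n ^ 30 := by
    intro n; rw [hA, hcpow]; congr 1; push_cast; ring
  have e18 : ∀ n, aseq n ^ ((3 / 2 : ℝ) * (1 - 7 / 6)) = c n ^ 18 := by
    intro n; rw [hA, hcpow]; congr 1; push_cast; ring
  have e12 : ∀ n, aseq n ^ (1 - (7 / 6 : ℝ)) = c n ^ 12 := by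
    intro n; rw [hA, hcpow]; congr 1; push_cast; ring
  have eneg : ∀ n, aseq n ^ ((7 / 6 : ℝ) - 1) = (c n ^ 12)⁻¹ := by
    intro n
    rw [hA, hcpow, ← Real.rpow_neg ha0.le]
    congr 1; push_cast; ring
  have e35 : ∀ n, c (n + 1) ^ 30 = c n ^ 35 := by
    intro n; rw [hcpow, hcpow]; congr 1; push_cast; ring
  have e21 : ∀ n, c (n + 1) ^ 18 = c n ^ 21 := by
    intro n; rw [hcpow, hcpow]; congr 1; push_cast; ring
  have hcpos : ∀ n, 0 < c n := fun n => Real.rpow_pos_of_pos ha0 _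
  have hcle1 : ∀ n, c n ≤ 1 := by
    intro n
    apply Real.rpow_le_one_of_one_le_of_nonpos ha1.le
    have : (0:ℝ) ≤ (7 / 6 : ℝ) ^ n := by positivity
    linarith
  have hKle : 8 * max C1 C2 ≤ a ^ (1 / 72 : ℝ) := by
    rcases le_or_gt (8 * max C1 C2) 1 with h | h
    · exact h.trans (Real.one_le_rpow ha1.le (by norm_num))
    · have h168 : ((8 * max C1 C2) ^ (168:ℕ) : ℝ) ^ (1 / 72 : ℝ) ≤ a ^ (1 / 72 : ℝ) :=
        Real.rpow_le_rpow (by positivity) haK (by norm_num)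
      calc 8 * max C1 C2 = (8 * max C1 C2) ^ (1 : ℝ) := (Real.rpow_one _).symm
        _ ≤ (8 * max C1 C2) ^ ((168 : ℝ) * (1 / 72 : ℝ)) :=
            Real.rpow_le_rpow_of_exponent_le h.le (by norm_num)
        _ = ((8 * max C1 C2) ^ (168 : ℝ)) ^ (1 / 72 : ℝ) := Real.rpow_mul hKpos.le _ _
        _ = ((8 * max C1 C2) ^ (168 : ℕ) : ℝ) ^ (1 / 72 : ℝ) := by
            rw [show ((168:ℝ)) = ((168:ℕ):ℝ) by norm_num, Real.rpow_natCast]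
        _ ≤ a ^ (1 / 72 : ℝ) := h168
  have hKc : ∀ n, (8 * max C1 C2) * c n ≤ 1 := by
    intro n
    have h1 : c n ≤ a ^ (-(1 / 72) : ℝ) := by
      rw [hc_def]
      apply Real.rpow_le_rpow_of_exponent_le ha1.le
      have : (1:ℝ) ≤ (7 / 6 : ℝ) ^ n := one_le_pow₀ (by norm_num)
      linarith
    calc (8 * max C1 C2) * c n ≤ a ^ (1 / 72 : ℝ) * a ^ (-(1 / 72) : ℝ) :=
          mul_le_mul hKle h1 (hcpos n).le (Real.rpow_nonneg ha0.le _)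
      _ = 1 := by rw [← Real.rpow_add ha0]; norm_num
  have key : ∀ n, p n ≤ c n ^ 30 ∧ q n ≤ c n ^ 18 := by
    intro n
    induction n with
    | zero => exact ⟨by rw [← e30 0]; exact hp0', by rw [← e18 0]; exact hq0'⟩
    | succ n ih =>
      have hc := hcpos n
      have hc1 := hcle1 n
      have hcond1 : 3 * C1 * c n ≤ 1 := by
        have h3 : 3 * C1 ≤ 8 * max C1 C2 := by
          have := le_max_left C1 C2; linarith
        exact le_trans (by nlinarith) (hKc n)
      have hcond2 : 8 * C2 * c n ^ 3 ≤ 1 := by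
        have h8 : 8 * C2 * c n ≤ 1 := by
          have h3 : 8 * C2 ≤ 8 * max C1 C2 := by
            have := le_max_right C1 C2; linarith
          exact le_trans (by nlinarith) (hKc n)
        have h2 : c n ^ 2 ≤ 1 := pow_le_one₀ hc.le hc1
        nlinarith [mul_le_mul h8 h2 (pow_nonneg hc.le 2) zero_le_one]
      have hp' := hprec (n + 1) (by omega)
      have hq' := hqrec (n + 1) (by omega)
      simp only [Nat.add_sub_cancel] at hp' hq'
      rw [eneg n, e12 n] at hp' hq'
      constructor
      · rw [e35 n]
        exact le_trans hp' (auxp C1 (c n) (p n) (q n) hc hc1 hC1.le hcond1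
          (hp0 n) (hq0 n) ih.1 ih.2)
      · rw [e21 n]
        exact le_trans hq' (auxq C2 (c n) (p n) (q n) hc hc1 hC2.le hcond2
          (hp0 n) (hq0 n) ih.1 ih.2)
  refine ⟨fun n => ⟨by rw [e30 n]; exact (key n).1, by rw [e18 n]; exact (key n).2⟩, ?_⟩
  have hbase : Filter.Tendsto c Filter.atTop (nhds 0) := by
    have hrepr : c = fun n => (a ^ (-(1 / 72) : ℝ)) ^ ((7 / 6 : ℝ) ^ n) := by
      funext n
      rw [hc_def, ← Real.rpow_mul ha0.le]
    rw [hrepr]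
    have hb1 : a ^ (-(1 / 72) : ℝ) < 1 :=
      Real.rpow_lt_one_of_one_lt_of_neg ha1 (by norm_num)
    have hb0 : (0:ℝ) < a ^ (-(1 / 72) : ℝ) := Real.rpow_pos_of_pos ha0 _
    exact (tendsto_rpow_atTop_of_base_lt_one _ (by linarith) hb1).comp
      (tendsto_pow_atTop_atTop_of_one_lt (by norm_num : (1:ℝ) < 7 / 6))
  have hpow : Filter.Tendsto (fun n => c n ^ 30) Filter.atTop (nhds 0) := by
    have := hbase.pow 30
    simpa using this
  exact squeeze_zero hp0 (fun n => (key n).1) hpow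
end
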